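/- Let k be a field and let E be a finitely generated, torsion-free module over the polynomial ring P = k[x_1, …, x_n] of rank 1 (i.e. the localization of E at the zero ideal, equivalently E ⊗_P Frac(P), is a 1-dimensional Frac(P)-vector space), equipped with a ℤ^n-grading compatible with the fine ℕ^n-grading of P (so that x^a · E_b ⊆ E_{a+b} for all a ∈ ℕ^n, b ∈ ℤ^n). Then E is isomorphic as a P-module to an ideal of P generated by monomials. -/

import Mathlib

set_option maxHeartbeats 2000000

open TensorProduct MvPolynomial

section AuxGraded

variable {E : Type*} [AddCommGroup E] {ι : Type*} [DecidableEq ι]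

lemma aux_proj (ℰ : ι → AddSubgroup E) (hdecomp : DirectSum.IsInternal ℰ) :
    ∃ π : ι → (E →+ E),
      (∀ d (e : E), e ∈ ℰ d → π d e = e) ∧
      (∀ d d' (e : E), e ∈ ℰ d' → d ≠ d' → π d e = 0) := by
  classical
  set g := AddEquiv.ofBijective (DirectSum.coeAddMonoidHom ℰ) hdecomp with hg
  have hsymm : ∀ d' (e : E) (h : e ∈ ℰ d'),
      g.symm e = DirectSum.of (fun i => ℰ i) d' ⟨e, h⟩ := by
    intro d' e h
    apply g.injective
    rw [AddEquiv.apply_symm_apply]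
    exact (DirectSum.coeAddMonoidHom_of ℰ d' ⟨e, h⟩).symm
  refine ⟨fun d => AddMonoidHom.mk' (fun e => ((g.symm e) d : E))
    (by intro a b; show ((g.symm (a+b)) d : E) = _
        rw [map_add, DirectSum.add_apply]; rfl), ?_, ?_⟩
  · intro d e h
    simp only [AddMonoidHom.mk'_apply, hsymm d e h]
    rw [DirectSum.of_eq_same]
  · intro d d' e h hne
    simp only [AddMonoidHom.mk'_apply, hsymm d' e h]
    rw [DirectSum.of_eq_of_ne _ _ _ hne]
    rfl

lemma aux_homog_gen (ℰ : ι → AddSubgroup E) (hdecomp : DirectSum.IsInternal ℰ)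
    (e : E) : ∃ s : Finset E, (∀ x ∈ s, ∃ d, x ∈ ℰ d) ∧
      e ∈ AddSubgroup.closure (s : Set E) := by
  classical
  set g := AddEquiv.ofBijective (DirectSum.coeAddMonoidHom ℰ) hdecomp with hg
  set w := g.symm e with hw
  refine ⟨(DFinsupp.support w).image (fun d => ((w d : E))), ?_, ?_⟩
  · intro x hx
    simp only [Finset.mem_image] at hx
    obtain ⟨d, _, rfl⟩ := hx
    exact ⟨d, (w d).2⟩
  · have key : e = ∑ d ∈ DFinsupp.support w, ((w d : E)) := by
      calc e = g w := (g.apply_symm_apply e).symm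
        _ = DirectSum.coeAddMonoidHom ℰ w := rfl
        _ = DirectSum.coeAddMonoidHom ℰ (∑ i ∈ DFinsupp.support w,
              DirectSum.of (fun i => ℰ i) i (w i)) := by
            exact congrArg _ (DirectSum.sum_support_of w).symm
        _ = ∑ i ∈ DFinsupp.support w, ((w i : E)) := by
            rw [map_sum]
            exact Finset.sum_congr rfl fun i _ => DirectSum.coeAddMonoidHom_of ℰ i (w i)
    rw [key]
    apply AddSubgroup.sum_mem
    intro d hd
    apply AddSubgroup.subset_closure
    simp only [Finset.coe_image, Set.mem_image, Finset.mem_coe]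
    exact ⟨d, hd, rfl⟩

end AuxGraded

section AuxKey

variable {k : Type*} [Field k] {n : ℕ}
  {E : Type*} [AddCommGroup E] [Module (MvPolynomial (Fin n) k) E]

lemma aux_deg_inj {a a' : Fin n →₀ ℕ} {b : Fin n → ℤ}
    (h : (fun i => (a' i : ℤ)) + b = (fun i => (a i : ℤ)) + b) : a' = a := by
  ext i
  have := congrFun h i
  simp only [Pi.add_apply, add_left_inj, Int.natCast_inj] at this
  exact this

lemma aux_exists_embedding
    (htf : ∀ (r : MvPolynomial (Fin n) k) (e : E), r • e = 0 → r = 0 ∨ e = 0)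
    (hrank : Module.rank (FractionRing (MvPolynomial (Fin n) k))
      (FractionRing (MvPolynomial (Fin n) k) ⊗[MvPolynomial (Fin n) k] E) = 1) :
    ∃ T : E →ₗ[MvPolynomial (Fin n) k] FractionRing (MvPolynomial (Fin n) k),
      Function.Injective T := by
  set P := MvPolynomial (Fin n) k
  set K := FractionRing P
  set f : E →ₗ[P] K ⊗[P] E := TensorProduct.mk P K E 1 with hf
  have hbc : IsLocalizedModule (nonZeroDivisors P) f :=
    (isLocalizedModule_iff_isBaseChange (nonZeroDivisors P) K f).mpr
      (TensorProduct.isBaseChange P E K)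
  have hinjf : Function.Injective f := by
    intro x y hxy
    have h0 : f (x - y) = 0 := by rw [map_sub, hxy, sub_self]
    obtain ⟨s, hs⟩ := (IsLocalizedModule.eq_zero_iff (nonZeroDivisors P) f).mp h0
    rcases htf s (x - y) hs with h | h
    · exact absurd h (nonZeroDivisors.ne_zero s.2)
    · exact sub_eq_zero.mp h
  have : Module.Free K (K ⊗[P] E) := Module.Free.of_divisionRing _ _
  obtain ⟨ψ⟩ := nonempty_linearEquiv_of_lift_rank_eq
    (M := K ⊗[P] E) (M' := K) (R := K) (by rw [hrank, Module.rank_self]; simp)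
  exact ⟨(ψ.restrictScalars P).toLinearMap.comp f,
    (ψ.restrictScalars P).injective.comp hinjf⟩

lemma aux_key (ℰ : (Fin n → ℤ) → AddSubgroup E)
    (hsmul : ∀ (c : k) (a : Fin n →₀ ℕ) (b : Fin n → ℤ) (e : E), e ∈ ℰ b →
      (MvPolynomial.monomial a c) • e ∈ ℰ ((fun i => (a i : ℤ)) + b))
    (π : (Fin n → ℤ) → (E →+ E))
    (hπ1 : ∀ d (e : E), e ∈ ℰ d → π d e = e)
    (hπ2 : ∀ d d' (e : E), e ∈ ℰ d' → d ≠ d' → π d e = 0)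
    (e e₀ : E) (b b₀ : Fin n → ℤ) (he : e ∈ ℰ b) (he₀ : e₀ ∈ ℰ b₀)
    (p q : MvPolynomial (Fin n) k) (hp : p ≠ 0) (hpq : p • e = q • e₀) :
    ∃ (a c : Fin n →₀ ℕ) (μ lam : k), μ ≠ 0 ∧
      (monomial a μ) • e = (monomial c lam) • e₀ := by
  classical
  obtain ⟨a, ha⟩ := Finset.nonempty_of_ne_empty (fun h0 => hp (by
    rwa [← MvPolynomial.support_eq_empty]))
  set d : Fin n → ℤ := (fun i => (a i : ℤ)) + b with hd
  have hL : π d (p • e) = (monomial a (p.coeff a)) • e := by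
    have hpe : p • e = ∑ a' ∈ p.support, (monomial a' (p.coeff a')) • e := by
      conv_lhs => rw [MvPolynomial.as_sum p]
      rw [Finset.sum_smul]
    rw [hpe, map_sum]
    have step : ∀ a' ∈ p.support, π d ((monomial a' (p.coeff a')) • e)
        = if a' = a then (monomial a' (p.coeff a')) • e else 0 := by
      intro a' _
      by_cases h : a' = a
      · subst h
        rw [if_pos rfl]
        exact hπ1 d _ (hsmul _ _ _ _ he)
      · rw [if_neg h]
        refine hπ2 d _ _ (hsmul _ _ _ _ he) ?_
        intro hdd
        exact h (aux_deg_inj hdd.symm)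
    rw [Finset.sum_congr rfl step, Finset.sum_ite_eq' p.support a
      (fun a' => (monomial a' (p.coeff a')) • e), if_pos ha]
  have hR : ∃ (c : Fin n →₀ ℕ) (lam : k),
      π d (q • e₀) = (monomial c lam) • e₀ := by
    have hqe : q • e₀ = ∑ c ∈ q.support, (monomial c (q.coeff c)) • e₀ := by
      conv_lhs => rw [MvPolynomial.as_sum q]
      rw [Finset.sum_smul]
    rw [hqe, map_sum]
    by_cases hex : ∃ c₀ : Fin n →₀ ℕ, (fun i => (c₀ i : ℤ)) + b₀ = d
    · obtain ⟨c₀, hc₀⟩ := hex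
      refine ⟨c₀, if c₀ ∈ q.support then q.coeff c₀ else 0, ?_⟩
      have step : ∀ c ∈ q.support, π d ((monomial c (q.coeff c)) • e₀)
          = if c = c₀ then (monomial c (q.coeff c)) • e₀ else 0 := by
        intro c _
        by_cases h : c = c₀
        · subst h
          rw [if_pos rfl]
          exact hπ1 d _ (hc₀ ▸ hsmul _ _ _ _ he₀)
        · rw [if_neg h]
          refine hπ2 d _ _ (hsmul _ _ _ _ he₀) ?_
          intro hdd
          exact h (aux_deg_inj (hdd.symm.trans hc₀.symm))
      rw [Finset.sum_congr rfl step, Finset.sum_ite_eq' q.support c₀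
        (fun c => (monomial c (q.coeff c)) • e₀)]
      by_cases hmem : c₀ ∈ q.support
      · rw [if_pos hmem, if_pos hmem]
      · rw [if_neg hmem, if_neg hmem, MvPolynomial.monomial_zero, zero_smul]
    · refine ⟨0, 0, ?_⟩
      rw [MvPolynomial.monomial_zero, zero_smul]
      apply Finset.sum_eq_zero
      intro c _
      refine hπ2 d _ _ (hsmul _ _ _ _ he₀) ?_
      intro hdd
      exact hex ⟨c, hdd.symm⟩
  obtain ⟨c, lam, hc⟩ := hR
  refine ⟨a, c, p.coeff a, lam, ?_, ?_⟩
  · exact MvPolynomial.mem_support_iff.mp ha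
  · rw [← hL, hpq, hc]

end AuxKey

theorem fine_graded_rank_one_torsion_free_is_monomial_ideal
    {k : Type*} [Field k] {n : ℕ}
    {E : Type*} [AddCommGroup E] [Module (MvPolynomial (Fin n) k) E]
    [Module.Finite (MvPolynomial (Fin n) k) E]
    (htf : ∀ (r : MvPolynomial (Fin n) k) (e : E), r • e = 0 → r = 0 ∨ e = 0)
    (hrank : Module.rank (FractionRing (MvPolynomial (Fin n) k))
      (FractionRing (MvPolynomial (Fin n) k) ⊗[MvPolynomial (Fin n) k] E) = 1)
    (ℰ : (Fin n → ℤ) → AddSubgroup E) (hdecomp : DirectSum.IsInternal ℰ)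
    (hsmul : ∀ (c : k) (a : Fin n →₀ ℕ) (b : Fin n → ℤ) (e : E), e ∈ ℰ b →
      (MvPolynomial.monomial a c) • e ∈ ℰ ((fun i => (a i : ℤ)) + b)) :
    ∃ I : Ideal (MvPolynomial (Fin n) k),
      (∃ A : Set (Fin n →₀ ℕ),
        I = Ideal.span ((fun a => MvPolynomial.monomial a (1 : k)) '' A)) ∧
      Nonempty (E ≃ₗ[MvPolynomial (Fin n) k] I) := by
  classical
  set P := MvPolynomial (Fin n) k with hP
  set K := FractionRing P with hK
  -- an injective P-linear embedding of E into the fraction field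
  obtain ⟨T, hT⟩ := aux_exists_embedding htf hrank
  -- graded projections
  obtain ⟨π, hπ1, hπ2⟩ := aux_proj ℰ hdecomp
  -- E is nontrivial
  have hnt : ∃ e : E, e ≠ 0 := by
    by_contra h
    push_neg at h
    have hz : ∀ z : K ⊗[P] E, z = 0 := by
      intro z
      induction z using TensorProduct.induction_on with
      | zero => rfl
      | tmul r m => rw [h m, tmul_zero]
      | add x y hx hy => rw [hx, hy, add_zero]
    have : Subsingleton (K ⊗[P] E) := ⟨fun x y => by rw [hz x, hz y]⟩
    rw [rank_subsingleton'] at hrank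
    exact zero_ne_one hrank
  -- a nonzero homogeneous element e₀
  obtain ⟨e, hene⟩ := hnt
  obtain ⟨s, hs_hom, hs_cl⟩ := aux_homog_gen ℰ hdecomp e
  have hex0 : ∃ x ∈ s, x ≠ 0 := by
    by_contra h
    push_neg at h
    have hsub : (s : Set E) ⊆ ({0} : Set E) := fun x hx => h x hx
    have := AddSubgroup.closure_mono hsub hs_cl
    rw [show ({0} : Set E) = ((⊥ : AddSubgroup E) : Set E) by simp,
      AddSubgroup.closure_eq] at this
    exact hene this
  obtain ⟨e₀, he₀s, he₀ne⟩ := hex0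
  obtain ⟨b₀, he₀⟩ := hs_hom e₀ he₀s
  have hTe₀ : T e₀ ≠ 0 := fun h0 => he₀ne (hT (by rw [h0, map_zero]))
  -- homogeneous finite generating set H
  obtain ⟨G, hG⟩ := (Module.Finite.fg_top : (⊤ : Submodule P E).FG)
  choose sfun hs1 hs2 using fun v : E => aux_homog_gen ℰ hdecomp v
  set H : Finset E := G.biUnion sfun with hH
  have hHhom : ∀ x ∈ H, ∃ d, x ∈ ℰ d := by
    intro x hx
    rw [hH, Finset.mem_biUnion] at hx
    obtain ⟨v, _, hxv⟩ := hx
    exact hs1 v x hxv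
  have hHspan : Submodule.span P (H : Set E) = ⊤ := by
    rw [eq_top_iff, ← hG, Submodule.span_le]
    intro v hv
    have hcl : v ∈ AddSubgroup.closure ((sfun v : Finset E) : Set E) := hs2 v
    have hle : AddSubgroup.closure ((sfun v : Finset E) : Set E)
        ≤ (Submodule.span P (H : Set E)).toAddSubgroup := by
      apply AddSubgroup.closure_le _ |>.mpr
      intro x hx
      apply Submodule.subset_span
      rw [hH]
      simp only [Finset.coe_biUnion, Set.mem_iUnion, Finset.mem_coe]
      exact ⟨v, hv, hx⟩
    exact hle hcl
  -- monomial relations against e₀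
  have hrel : ∀ x : E, (∃ d, x ∈ ℰ d) → ∃ (c' a' : Fin n →₀ ℕ) (lam : k),
      (monomial a' (1:k)) • x = (monomial c' lam) • e₀ := by
    intro x hx
    obtain ⟨b, hb⟩ := hx
    obtain ⟨⟨r, sd⟩, hrs⟩ := IsLocalization.surj (nonZeroDivisors P) (T x)
    obtain ⟨⟨r₀, s₀⟩, hrs₀⟩ := IsLocalization.surj (nonZeroDivisors P) (T e₀)
    have halg_inj : Function.Injective (algebraMap P K) := IsFractionRing.injective P K
    have hr₀ : r₀ ≠ 0 := by
      intro h0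
      rw [h0, map_zero] at hrs₀
      rcases mul_eq_zero.mp hrs₀ with h | h
      · exact hTe₀ h
      · exact nonZeroDivisors.ne_zero s₀.2 (halg_inj (by rw [h, map_zero]))
    have hsd : (sd : P) ≠ 0 := nonZeroDivisors.ne_zero sd.2
    have hp : (r₀ * (sd : P)) ≠ 0 := mul_ne_zero hr₀ hsd
    have hpq : (r₀ * (sd : P)) • x = (r * (s₀ : P)) • e₀ := by
      apply hT
      rw [map_smul, map_smul]
      rw [Algebra.smul_def, Algebra.smul_def, map_mul, map_mul]
      calc algebraMap P K r₀ * algebraMap P K (sd : P) * T x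
          = algebraMap P K r₀ * (T x * algebraMap P K (sd : P)) := by ring
        _ = algebraMap P K r₀ * algebraMap P K r := by rw [hrs]
        _ = algebraMap P K r * (T e₀ * algebraMap P K (s₀ : P)) := by rw [hrs₀]; ring
        _ = algebraMap P K r * algebraMap P K (s₀ : P) * T e₀ := by ring
    obtain ⟨a, c, μ, lam, hμ, heq⟩ := aux_key ℰ hsmul π hπ1 hπ2 x e₀ b b₀ hb he₀
      (r₀ * (sd : P)) (r * (s₀ : P)) hp hpq
    refine ⟨c, a, μ⁻¹ * lam, ?_⟩
    have h1 : (monomial a (1:k)) = MvPolynomial.C μ⁻¹ * monomial a μ := by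
      rw [MvPolynomial.C_mul_monomial, inv_mul_cancel₀ hμ]
    have h2 : (monomial c (μ⁻¹ * lam)) = MvPolynomial.C μ⁻¹ * monomial c lam := by
      rw [MvPolynomial.C_mul_monomial]
    rw [h1, h2, mul_smul, mul_smul, heq]
  -- turn relations into total functions
  have hrel' : ∀ x : E, ∃ (c' a' : Fin n →₀ ℕ) (lam : k),
      (∃ d, x ∈ ℰ d) → (monomial a' (1:k)) • x = (monomial c' lam) • e₀ := by
    intro x
    by_cases hx : ∃ d, x ∈ ℰ d
    · obtain ⟨c', a', lam, h⟩ := hrel x hx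
      exact ⟨c', a', lam, fun _ => h⟩
    · exact ⟨0, 0, 0, fun h => absurd h hx⟩
  choose cf af lamf hrelf using hrel'
  -- common denominator
  set N : Fin n →₀ ℕ := ∑ x ∈ H, af x with hN
  have hNle : ∀ x ∈ H, af x ≤ N := by
    intro x hx
    rw [hN]
    exact Finset.single_le_sum (f := af) (fun y _ => zero_le) hx
  set df : E → (Fin n →₀ ℕ) := fun x => cf x + (N - af x) with hdf
  have hsum : ∀ x ∈ H, af x + df x = cf x + N := by
    intro x hx
    rw [hdf]
    simp only
    rw [add_comm (cf x) (N - af x), ← add_assoc, add_tsub_cancel_of_le (hNle x hx),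
      add_comm]
  -- the twisted embedding
  set u : K := algebraMap P K (monomial N (1:k)) * (T e₀)⁻¹ with hu
  have hu0 : u ≠ 0 := by
    apply mul_ne_zero
    · intro h0
      have := (IsFractionRing.injective P K) (by rw [h0, map_zero] : algebraMap P K (monomial N (1:k)) = algebraMap P K 0)
      rw [MvPolynomial.monomial_eq_zero] at this
      exact one_ne_zero this
    · exact inv_ne_zero hTe₀
  set T'' : E →ₗ[P] K := (LinearMap.mulLeft P u).comp T with hT''def
  have hT'' : Function.Injective T'' := by
    intro x y hxy
    apply hT
    exact mul_left_cancel₀ hu0 hxy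
  have hT''app : ∀ x : E, T'' x = u * T x := fun x => rfl
  -- values of T'' on H
  have hTval : ∀ x ∈ H, T'' x = algebraMap P K (monomial (df x) (lamf x)) := by
    intro x hx
    have hx' := hrelf x (hHhom x hx)
    have h1 : algebraMap P K (monomial (af x) (1:k)) * T x
        = algebraMap P K (monomial (cf x) (lamf x)) * T e₀ := by
      have := congrArg T hx'
      rw [map_smul, map_smul, Algebra.smul_def, Algebra.smul_def] at this
      exact this
    have hLa : algebraMap P K (monomial (af x) (1:k)) ≠ 0 := by
      intro h0
      have := (IsFractionRing.injective P K)
        (by rw [h0, map_zero] : algebraMap P K (monomial (af x) (1:k)) = algebraMap P K 0)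
      rw [MvPolynomial.monomial_eq_zero] at this
      exact one_ne_zero this
    apply mul_left_cancel₀ hLa
    rw [hT''app, hu]
    calc algebraMap P K (monomial (af x) (1:k)) *
          (algebraMap P K (monomial N (1:k)) * (T e₀)⁻¹ * T x)
        = algebraMap P K (monomial N (1:k)) * (T e₀)⁻¹ *
            (algebraMap P K (monomial (af x) (1:k)) * T x) := by ring
      _ = algebraMap P K (monomial N (1:k)) * (T e₀)⁻¹ *
            (algebraMap P K (monomial (cf x) (lamf x)) * T e₀) := by rw [h1]
      _ = algebraMap P K (monomial N (1:k)) *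
            algebraMap P K (monomial (cf x) (lamf x)) * ((T e₀)⁻¹ * T e₀) := by ring
      _ = algebraMap P K (monomial N (1:k)) *
            algebraMap P K (monomial (cf x) (lamf x)) := by
          rw [inv_mul_cancel₀ hTe₀, mul_one]
      _ = algebraMap P K (monomial N (1:k) * monomial (cf x) (lamf x)) :=
          (map_mul _ _ _).symm
      _ = algebraMap P K (monomial (af x) (1:k) * monomial (df x) (lamf x)) := by
          rw [MvPolynomial.monomial_mul, MvPolynomial.monomial_mul, one_mul,
            hsum x hx, add_comm N (cf x)]
      _ = algebraMap P K (monomial (af x) (1:k)) *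
            algebraMap P K (monomial (df x) (lamf x)) := map_mul _ _ _
  -- the monomial ideal
  set A : Set (Fin n →₀ ℕ) := df '' {x : E | x ∈ H ∧ lamf x ≠ 0} with hA
  set I : Ideal P := Ideal.span ((fun a => MvPolynomial.monomial a (1 : k)) '' A) with hI
  -- range of T'' equals the image of I in K
  have hrange : LinearMap.range T'' = Submodule.map (Algebra.linearMap P K) I := by
    have h1 : LinearMap.range T'' = Submodule.span P (T'' '' (H : Set E)) := by
      rw [← Submodule.map_top, ← hHspan, Submodule.map_span]
    have h2 : T'' '' (H : Set E)
        = (Algebra.linearMap P K) '' ((fun x => monomial (df x) (lamf x)) '' (H : Set E)) := by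
      rw [Set.image_image]
      apply Set.image_congr
      intro x hx
      rw [hTval x hx]
      rfl
    have h3 : Submodule.span P ((fun x => monomial (df x) (lamf x)) '' (H : Set E)) = I := by
      apply le_antisymm
      · rw [Submodule.span_le]
        rintro _ ⟨x, hx, rfl⟩
        show (monomial (df x)) (lamf x) ∈ I
        by_cases h0 : lamf x = 0
        · rw [h0, MvPolynomial.monomial_zero]
          exact Submodule.zero_mem _
        · have : monomial (df x) (lamf x)
              = MvPolynomial.C (lamf x) * monomial (df x) (1:k) := by
            rw [MvPolynomial.C_mul_monomial, mul_one]
          rw [this]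
          have hgen : monomial (df x) (1:k)
              ∈ ((fun a => MvPolynomial.monomial a (1 : k)) '' A) := by
            exact ⟨df x, ⟨x, ⟨hx, h0⟩, rfl⟩, rfl⟩
          have hmem : monomial (df x) (1:k) ∈ I := Ideal.subset_span hgen
          exact I.smul_mem (MvPolynomial.C (lamf x)) hmem
      · rw [hI, Ideal.span_le]
        rintro _ ⟨a, ⟨x, ⟨hx, h0⟩, rfl⟩, rfl⟩
        show (monomial (df x)) (1:k)
          ∈ Submodule.span P ((fun x => monomial (df x) (lamf x)) '' (H : Set E))
        have : monomial (df x) (1:k)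
            = MvPolynomial.C (lamf x)⁻¹ * monomial (df x) (lamf x) := by
          rw [MvPolynomial.C_mul_monomial, inv_mul_cancel₀ h0]
        rw [this]
        exact Submodule.smul_mem _ _ (Submodule.subset_span ⟨x, hx, rfl⟩)
    rw [h1, h2, ← Submodule.map_span, h3]
  -- conclude
  have halg_inj : Function.Injective (Algebra.linearMap P K) := IsFractionRing.injective P K
  refine ⟨I, ⟨A, hI⟩, ⟨?_⟩⟩
  exact (LinearEquiv.ofInjective T'' hT'').trans
    ((LinearEquiv.ofEq _ _ hrange).trans
      (Submodule.equivMapOfInjective (Algebra.linearMap P K) halg_inj I).symm)
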